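/- For each p ∈ (0,∞] (with 𝕜 = ℝ or ℂ) there exists a linearly independent sequence (v_n)_{n≥2} of elements of ℓ_p ∩ c₀ with the following property: for every bounded scalar sequence (t_n)_{n≥2}, the series x(k) := ∑_{n=2}^∞ t_n v_n(k) converges absolutely for every k ∈ ℕ, the resulting sequence x lies in ℓ_p, d_p(∑_{n=2}^N t_n v_n, x) → 0 as N → ∞, x = 0 only if t_n = 0 for all n ≥ 2, and whenever x ≠ 0 the zero set {k : x(k) = 0} is finite. In particular, Z(ℓ_p) is [ℓ_∞]-lineable. -/
import Mathlib


open Filter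
open scoped ENNReal

/-- Membership in `ℓ_p` for `p ∈ (0,∞]`: for `p = ∞` boundedness, for
`p < ∞` summability of `‖x n‖^p`. -/
def InLp {𝕜 : Type} [RCLike 𝕜] (p : ℝ≥0∞) (x : ℕ → 𝕜) : Prop :=
  if p = ⊤ then ∃ C : ℝ, ∀ n, ‖x n‖ ≤ C
  else Summable (fun n => ‖x n‖ ^ p.toReal)

/-- The `p`-distance on `ℓ_p`. -/
noncomputable def dp {𝕜 : Type} [RCLike 𝕜] (p : ℝ≥0∞) (x y : ℕ → 𝕜) : ℝ :=
  if p = ⊤ then ⨆ n, ‖x n - y n‖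
  else if p < 1 then ∑' n, ‖x n - y n‖ ^ p.toReal
  else (∑' n, ‖x n - y n‖ ^ p.toReal) ^ (1 / p.toReal)

/-- A set of sequences is closed in `ℓ_p` if it contains every `ℓ_p`-limit
(in the `p`-distance) of sequences of its elements. -/
def IsClosedInLp {𝕜 : Type} [RCLike 𝕜] (p : ℝ≥0∞) (F : Set (ℕ → 𝕜)) : Prop :=
  ∀ f : ℕ → (ℕ → 𝕜), (∀ j, f j ∈ F) → ∀ x : ℕ → 𝕜, InLp p x →
    Tendsto (fun j => dp p (f j) x) atTop (nhds 0) → x ∈ F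


set_option maxHeartbeats 1000000


namespace Stmt3Aux

variable {𝕜 : Type} [RCLike 𝕜]

noncomputable def vv (𝕜 : Type) [RCLike 𝕜] (n k : ℕ) : 𝕜 :=
  (2 : 𝕜)⁻¹ ^ ((n + 1) * (k + 1))

lemma norm_vv (n k : ℕ) : ‖vv 𝕜 n k‖ = (2⁻¹ : ℝ) ^ ((n + 1) * (k + 1)) := by
  rw [vv, norm_pow, norm_inv]
  norm_num

lemma half_pow_le {a b : ℕ} (h : a ≤ b) : (2⁻¹ : ℝ) ^ b ≤ (2⁻¹ : ℝ) ^ a :=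
  pow_le_pow_of_le_one (by norm_num) (by norm_num) h

lemma k_le (n k : ℕ) : k ≤ (n + 1) * (k + 1) := by
  have : k + 1 ≤ (n + 1) * (k + 1) := Nat.le_mul_of_pos_left _ n.succ_pos
  omega

lemma norm_vv_le (n k : ℕ) : ‖vv 𝕜 n k‖ ≤ (2⁻¹ : ℝ) ^ (n + 1) := by
  rw [norm_vv]
  exact half_pow_le (Nat.le_mul_of_pos_right _ k.succ_pos)

variable {t : ℕ → 𝕜} {C : ℝ}

lemma summable_norm (ht : ∀ n, ‖t n‖ ≤ C) (k : ℕ) :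
    Summable (fun n => ‖t n * vv 𝕜 n k‖) := by
  have hC : 0 ≤ C := le_trans (norm_nonneg _) (ht 0)
  apply Summable.of_nonneg_of_le (fun n => norm_nonneg _) (fun n => ?_)
    ((summable_geometric_of_lt_one (r := (2⁻¹:ℝ)) (by norm_num) (by norm_num)).mul_left (C * 2⁻¹))
  rw [norm_mul]
  calc ‖t n‖ * ‖vv 𝕜 n k‖ ≤ C * (2⁻¹ : ℝ) ^ (n + 1) :=
        mul_le_mul (ht n) (norm_vv_le n k) (norm_nonneg _) hC
    _ = C * 2⁻¹ * (2⁻¹ : ℝ) ^ n := by ring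

lemma summable_tv (ht : ∀ n, ‖t n‖ ≤ C) (k : ℕ) :
    Summable (fun n => t n * vv 𝕜 n k) :=
  (summable_norm ht k).of_norm

lemma tail_le (hC : 0 ≤ C) (ht : ∀ n, ‖t n‖ ≤ C) (M k : ℕ) :
    ‖∑' i, t (i + M) * vv 𝕜 (i + M) k‖
      ≤ C * ((2⁻¹ : ℝ) ^ (M * (k + 1)) * (2⁻¹ : ℝ) ^ k) := by
  have hs : Summable (fun i => ‖t (i + M) * vv 𝕜 (i + M) k‖) :=
    (summable_nat_add_iff M).mpr (summable_norm ht k)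
  have hgeo : Summable (fun i : ℕ => C * (2⁻¹ : ℝ) ^ ((M + 1) * (k + 1)) * (2⁻¹ : ℝ) ^ i) :=
    (summable_geometric_of_lt_one (r := (2⁻¹:ℝ)) (by norm_num) (by norm_num)).mul_left _
  have hterm : ∀ i, ‖t (i + M) * vv 𝕜 (i + M) k‖
      ≤ C * (2⁻¹ : ℝ) ^ ((M + 1) * (k + 1)) * (2⁻¹ : ℝ) ^ i := by
    intro i
    rw [norm_mul, norm_vv]
    have h1 : (M + 1) * (k + 1) + i ≤ (i + M + 1) * (k + 1) := by
      have h2 : (i + M + 1) * (k + 1) = (M + 1) * (k + 1) + i * (k + 1) := by ring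
      rw [h2]
      exact Nat.add_le_add_left (Nat.le_mul_of_pos_right _ k.succ_pos) _
    calc ‖t (i + M)‖ * (2⁻¹ : ℝ) ^ ((i + M + 1) * (k + 1))
        ≤ C * (2⁻¹ : ℝ) ^ ((M + 1) * (k + 1) + i) :=
          mul_le_mul (ht _) (half_pow_le h1) (by positivity) hC
      _ = C * (2⁻¹ : ℝ) ^ ((M + 1) * (k + 1)) * (2⁻¹ : ℝ) ^ i := by
          rw [pow_add]; ring
  calc ‖∑' i, t (i + M) * vv 𝕜 (i + M) k‖
      ≤ ∑' i, ‖t (i + M) * vv 𝕜 (i + M) k‖ := norm_tsum_le_tsum_norm hs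
    _ ≤ ∑' i : ℕ, C * (2⁻¹ : ℝ) ^ ((M + 1) * (k + 1)) * (2⁻¹ : ℝ) ^ i :=
        Summable.tsum_le_tsum hterm hs hgeo
    _ = C * (2⁻¹ : ℝ) ^ ((M + 1) * (k + 1)) * (1 - 2⁻¹)⁻¹ := by
        rw [tsum_mul_left, tsum_geometric_of_lt_one (by norm_num) (by norm_num)]
    _ = C * ((2⁻¹ : ℝ) ^ (M * (k + 1)) * (2⁻¹ : ℝ) ^ k) := by
        rw [show (M + 1) * (k + 1) = M * (k + 1) + (k + 1) by ring, pow_add, pow_succ]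
        have h2 : ((1 : ℝ) - 2⁻¹)⁻¹ = 2 := by norm_num
        rw [h2]
        have h3 : (2⁻¹ : ℝ) * 2 = 1 := by norm_num
        calc C * ((2⁻¹:ℝ) ^ (M * (k+1)) * ((2⁻¹:ℝ) ^ k * 2⁻¹)) * 2
            = C * ((2⁻¹:ℝ) ^ (M * (k+1)) * (2⁻¹:ℝ) ^ k) * ((2⁻¹:ℝ) * 2) := by ring
          _ = C * ((2⁻¹:ℝ) ^ (M * (k+1)) * (2⁻¹:ℝ) ^ k) := by rw [h3, mul_one]

lemma x_le (hC : 0 ≤ C) (ht : ∀ n, ‖t n‖ ≤ C) (k : ℕ) :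
    ‖∑' n, t n * vv 𝕜 n k‖ ≤ C * (2⁻¹ : ℝ) ^ k := by
  have := tail_le (𝕜 := 𝕜) hC ht 0 k
  simpa using this

lemma diff_le (hC : 0 ≤ C) (ht : ∀ n, ‖t n‖ ≤ C) (N k : ℕ) :
    ‖(∑ n ∈ Finset.range N, t n * vv 𝕜 n k) - ∑' n, t n * vv 𝕜 n k‖
      ≤ C * (2⁻¹ : ℝ) ^ N * (2⁻¹ : ℝ) ^ k := by
  have hdiff : (∑' n, t n * vv 𝕜 n k) - (∑ n ∈ Finset.range N, t n * vv 𝕜 n k)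
      = ∑' i, t (i + N) * vv 𝕜 (i + N) k :=
    sub_eq_of_eq_add' (Summable.sum_add_tsum_nat_add N (summable_tv ht k)).symm
  rw [norm_sub_rev, hdiff]
  calc ‖∑' i, t (i + N) * vv 𝕜 (i + N) k‖
      ≤ C * ((2⁻¹ : ℝ) ^ (N * (k + 1)) * (2⁻¹ : ℝ) ^ k) := tail_le hC ht N k
    _ ≤ C * ((2⁻¹ : ℝ) ^ N * (2⁻¹ : ℝ) ^ k) := by
        refine mul_le_mul_of_nonneg_left ?_ hC
        exact mul_le_mul_of_nonneg_right
          (half_pow_le (Nat.le_mul_of_pos_right _ k.succ_pos)) (by positivity)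
    _ = C * (2⁻¹ : ℝ) ^ N * (2⁻¹ : ℝ) ^ k := by ring

lemma t_eq_zero (hC : 0 ≤ C) (ht : ∀ n, ‖t n‖ ≤ C)
    (hx : ∀ k, ∑' n, t n * vv 𝕜 n k = 0) : ∀ n, t n = 0 := by
  intro n
  induction n using Nat.strong_induction_on with
  | _ n IH =>
    have key : ∀ k : ℕ, ‖t n‖ ≤ C * (2⁻¹ : ℝ) ^ k := by
      intro k
      have hsum : Summable (fun i => t (i + n) * vv 𝕜 (i + n) k) :=
        (summable_nat_add_iff n).mpr (summable_tv ht k)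
      have hpre : ∑ i ∈ Finset.range n, t i * vv 𝕜 i k = 0 :=
        Finset.sum_eq_zero (fun i hi => by rw [IH i (Finset.mem_range.mp hi), zero_mul])
      have h2 : ∑' i, t (i + n) * vv 𝕜 (i + n) k = 0 := by
        have h1 := Summable.sum_add_tsum_nat_add n (summable_tv ht k)
        rw [hpre, zero_add, hx k] at h1
        exact h1
      have h3 := Summable.tsum_eq_zero_add hsum
      rw [h2] at h3
      simp only [Nat.zero_add] at h3
      have hfn : (fun i => t (i + 1 + n) * vv 𝕜 (i + 1 + n) k)
          = (fun i => t (i + (n + 1)) * vv 𝕜 (i + (n + 1)) k) := by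
        funext i; congr 2 <;> omega
      rw [hfn] at h3
      have h4 : t n * vv 𝕜 n k = -∑' i, t (i + (n + 1)) * vv 𝕜 (i + (n + 1)) k :=
        eq_neg_of_add_eq_zero_left h3.symm
      have h5 : ‖t n‖ * (2⁻¹ : ℝ) ^ ((n + 1) * (k + 1))
          ≤ C * ((2⁻¹ : ℝ) ^ ((n + 1) * (k + 1)) * (2⁻¹ : ℝ) ^ k) := by
        have he : ‖t n‖ * (2⁻¹ : ℝ) ^ ((n + 1) * (k + 1)) = ‖t n * vv 𝕜 n k‖ := by
          rw [norm_mul, norm_vv]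
        rw [he, h4, norm_neg]
        exact tail_le hC ht (n + 1) k
      have hp : (0 : ℝ) < (2⁻¹ : ℝ) ^ ((n + 1) * (k + 1)) := by positivity
      have h6 : ‖t n‖ * (2⁻¹ : ℝ) ^ ((n + 1) * (k + 1))
          ≤ (C * (2⁻¹ : ℝ) ^ k) * (2⁻¹ : ℝ) ^ ((n + 1) * (k + 1)) := by
        calc ‖t n‖ * (2⁻¹ : ℝ) ^ ((n + 1) * (k + 1))
            ≤ C * ((2⁻¹ : ℝ) ^ ((n + 1) * (k + 1)) * (2⁻¹ : ℝ) ^ k) := h5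
          _ = (C * (2⁻¹ : ℝ) ^ k) * (2⁻¹ : ℝ) ^ ((n + 1) * (k + 1)) := by ring
      exact le_of_mul_le_mul_right h6 hp
    have hlim : Tendsto (fun k : ℕ => C * (2⁻¹ : ℝ) ^ k) atTop (nhds 0) := by
      have := (tendsto_pow_atTop_nhds_zero_of_lt_one
        (show (0:ℝ) ≤ 2⁻¹ by norm_num) (by norm_num)).const_mul C
      simpa using this
    have hle : ‖t n‖ ≤ 0 := ge_of_tendsto' hlim key
    simpa using le_antisymm hle (norm_nonneg _)

lemma zero_set_finite (hC : 0 ≤ C) (ht : ∀ n, ‖t n‖ ≤ C) {m : ℕ}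
    (htm : t m ≠ 0) (hmin : ∀ j, j < m → t j = 0) :
    {k : ℕ | (∑' n, t n * vv 𝕜 n k) = 0}.Finite := by
  have hlim : Tendsto (fun k : ℕ => C * (2⁻¹ : ℝ) ^ k) atTop (nhds 0) := by
    have := (tendsto_pow_atTop_nhds_zero_of_lt_one
      (show (0:ℝ) ≤ 2⁻¹ by norm_num) (by norm_num)).const_mul C
    simpa using this
  obtain ⟨K, hK⟩ := (hlim.eventually_lt_const (norm_pos_iff.mpr htm)).exists
  apply Set.Finite.subset (Set.finite_Iio K)
  intro k hk
  by_contra hkK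
  have hKk : K ≤ k := not_lt.mp hkK
  -- decompose x k
  have hsum : Summable (fun i => t (i + m) * vv 𝕜 (i + m) k) :=
    (summable_nat_add_iff m).mpr (summable_tv ht k)
  have hpre : ∑ i ∈ Finset.range m, t i * vv 𝕜 i k = 0 :=
    Finset.sum_eq_zero (fun i hi => by rw [hmin i (Finset.mem_range.mp hi), zero_mul])
  have h2 : ∑' i, t (i + m) * vv 𝕜 (i + m) k = 0 := by
    have h1 := Summable.sum_add_tsum_nat_add m (summable_tv ht k)
    rw [hpre, zero_add, hk] at h1
    exact h1
  have h3 := Summable.tsum_eq_zero_add hsum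
  rw [h2] at h3
  simp only [Nat.zero_add] at h3
  have hfn : (fun i => t (i + 1 + m) * vv 𝕜 (i + 1 + m) k)
      = (fun i => t (i + (m + 1)) * vv 𝕜 (i + (m + 1)) k) := by
    funext i; congr 2 <;> omega
  rw [hfn] at h3
  have h4 : t m * vv 𝕜 m k = -∑' i, t (i + (m + 1)) * vv 𝕜 (i + (m + 1)) k :=
    eq_neg_of_add_eq_zero_left h3.symm
  have h5 : ‖t m‖ * (2⁻¹ : ℝ) ^ ((m + 1) * (k + 1))
      ≤ C * ((2⁻¹ : ℝ) ^ ((m + 1) * (k + 1)) * (2⁻¹ : ℝ) ^ k) := by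
    have he : ‖t m‖ * (2⁻¹ : ℝ) ^ ((m + 1) * (k + 1)) = ‖t m * vv 𝕜 m k‖ := by
      rw [norm_mul, norm_vv]
    rw [he, h4, norm_neg]
    exact tail_le hC ht (m + 1) k
  have hp : (0 : ℝ) < (2⁻¹ : ℝ) ^ ((m + 1) * (k + 1)) := by positivity
  have h7 : ‖t m‖ ≤ C * (2⁻¹ : ℝ) ^ k := by
    have h6 : ‖t m‖ * (2⁻¹ : ℝ) ^ ((m + 1) * (k + 1))
        ≤ (C * (2⁻¹ : ℝ) ^ k) * (2⁻¹ : ℝ) ^ ((m + 1) * (k + 1)) := by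
      calc ‖t m‖ * (2⁻¹ : ℝ) ^ ((m + 1) * (k + 1))
          ≤ C * ((2⁻¹ : ℝ) ^ ((m + 1) * (k + 1)) * (2⁻¹ : ℝ) ^ k) := h5
        _ = (C * (2⁻¹ : ℝ) ^ k) * (2⁻¹ : ℝ) ^ ((m + 1) * (k + 1)) := by ring
    exact le_of_mul_le_mul_right h6 hp
  have h8 : C * (2⁻¹ : ℝ) ^ k ≤ C * (2⁻¹ : ℝ) ^ K :=
    mul_le_mul_of_nonneg_left (half_pow_le hKk) hC
  linarith

lemma pow_rpow_comm (e : ℝ) (N : ℕ) :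
    ((2⁻¹ : ℝ) ^ N) ^ e = ((2⁻¹ : ℝ) ^ e) ^ N := by
  rw [← Real.rpow_natCast (2⁻¹ : ℝ) N, ← Real.rpow_mul (by norm_num), mul_comm,
    Real.rpow_mul (by norm_num), Real.rpow_natCast]

end Stmt3Aux

open Stmt3Aux

/-- For each `p ∈ (0,∞]` there exists a linearly independent
sequence `(v n)` of elements of `ℓ_p ∩ c₀` such that for every bounded scalar
sequence `t`, the series `x k = ∑' n, t n * v n k` converges absolutely for
every `k`, `x ∈ ℓ_p`, the partial sums converge to `x` in the `p`-distance,
`x = 0` only if `t = 0`, and whenever `x ≠ 0` its zero set is finite.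
In particular, `Z(ℓ_p)` is `[ℓ_∞]`-lineable. -/
theorem stmt3 {𝕜 : Type} [RCLike 𝕜] (p : ℝ≥0∞) (hp : 0 < p) :
    ∃ v : ℕ → (ℕ → 𝕜),
      LinearIndependent 𝕜 v ∧
      (∀ n, InLp p (v n) ∧ Tendsto (v n) atTop (nhds 0)) ∧
      ∀ t : ℕ → 𝕜, (∃ C : ℝ, ∀ n, ‖t n‖ ≤ C) →
        (∀ k : ℕ, Summable (fun n => ‖t n * v n k‖)) ∧
        InLp p (fun k => ∑' n, t n * v n k) ∧
        Tendsto (fun N => dp p (fun k => ∑ n ∈ Finset.range N, t n * v n k)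
          (fun k => ∑' n, t n * v n k)) atTop (nhds 0) ∧
        ((fun k => ∑' n, t n * v n k) = 0 → ∀ n, t n = 0) ∧
        ((fun k => ∑' n, t n * v n k) ≠ 0 →
          {k : ℕ | (∑' n, t n * v n k) = 0}.Finite) := by
  classical
  have hhalf0 : (0:ℝ) ≤ 2⁻¹ := by norm_num
  have hhalf1 : (2⁻¹:ℝ) < 1 := by norm_num
  refine ⟨vv 𝕜, ?_, ?_, ?_⟩
  · -- linear independence
    rw [linearIndependent_iff']
    intro s g hsum i hi
    set t : ℕ → 𝕜 := fun n => if n ∈ s then g n else 0 with htdef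
    have hCnn : 0 ≤ ∑ j ∈ s, ‖g j‖ := Finset.sum_nonneg fun j _ => norm_nonneg _
    have hC : ∀ n, ‖t n‖ ≤ ∑ j ∈ s, ‖g j‖ := by
      intro n
      by_cases h : n ∈ s
      · simp only [htdef, if_pos h]
        exact Finset.single_le_sum (fun j _ => norm_nonneg (g j)) h
      · simp only [htdef, if_neg h, norm_zero]
        exact hCnn
    have hx : ∀ k, ∑' n, t n * vv 𝕜 n k = 0 := by
      intro k
      have h1 : ∑' n, t n * vv 𝕜 n k = ∑ n ∈ s, t n * vv 𝕜 n k :=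
        tsum_eq_sum (fun b hb => by simp [htdef, hb])
      have h2 : ∑ n ∈ s, t n * vv 𝕜 n k = ∑ n ∈ s, g n * vv 𝕜 n k :=
        Finset.sum_congr rfl (fun n hn => by simp [htdef, hn])
      have h3 := congrFun hsum k
      simp only [Finset.sum_apply, Pi.smul_apply, smul_eq_mul, Pi.zero_apply] at h3
      rw [h1, h2]; exact h3
    have := t_eq_zero hCnn hC hx i
    simpa [htdef, hi] using this
  · -- each v n in ℓ_p ∩ c₀
    intro n
    constructor
    · by_cases hptop : p = ⊤
      · rw [InLp, if_pos hptop]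
        refine ⟨1, fun k => ?_⟩
        rw [norm_vv]
        exact pow_le_one₀ hhalf0 hhalf1.le
      · rw [InLp, if_neg hptop]
        have hp' : 0 < p.toReal := ENNReal.toReal_pos hp.ne' hptop
        have hρ1 : (2⁻¹:ℝ) ^ p.toReal < 1 := Real.rpow_lt_one hhalf0 hhalf1 hp'
        have hρ0 : (0:ℝ) ≤ (2⁻¹:ℝ) ^ p.toReal := Real.rpow_nonneg hhalf0 _
        apply Summable.of_nonneg_of_le (fun k => Real.rpow_nonneg (norm_nonneg _) _)
          (fun k => ?_) (summable_geometric_of_lt_one hρ0 hρ1)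
        rw [norm_vv]
        calc ((2⁻¹:ℝ) ^ ((n+1)*(k+1))) ^ p.toReal
            ≤ ((2⁻¹:ℝ) ^ k) ^ p.toReal :=
              Real.rpow_le_rpow (by positivity) (half_pow_le (k_le n k)) hp'.le
          _ = ((2⁻¹:ℝ) ^ p.toReal) ^ k := pow_rpow_comm _ _
    · apply squeeze_zero_norm (fun k => ?_)
        (tendsto_pow_atTop_nhds_zero_of_lt_one hhalf0 hhalf1)
      rw [norm_vv]
      exact half_pow_le (k_le n k)
  · -- main part
    rintro t ⟨C, htC⟩
    have hC : 0 ≤ C := le_trans (norm_nonneg _) (htC 0)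
    have hlim : ∀ A : ℝ, Tendsto (fun N : ℕ => A * (2⁻¹:ℝ) ^ N) atTop (nhds 0) := by
      intro A
      have := (tendsto_pow_atTop_nhds_zero_of_lt_one hhalf0 hhalf1).const_mul A
      simpa using this
    refine ⟨fun k => summable_norm htC k, ?_, ?_, ?_, ?_⟩
    · -- InLp x
      by_cases hptop : p = ⊤
      · rw [InLp, if_pos hptop]
        refine ⟨C, fun k => le_trans (x_le hC htC k) ?_⟩
        exact mul_le_of_le_one_right hC (pow_le_one₀ hhalf0 hhalf1.le)
      · rw [InLp, if_neg hptop]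
        have hp' : 0 < p.toReal := ENNReal.toReal_pos hp.ne' hptop
        have hρ1 : (2⁻¹:ℝ) ^ p.toReal < 1 := Real.rpow_lt_one hhalf0 hhalf1 hp'
        have hρ0 : (0:ℝ) ≤ (2⁻¹:ℝ) ^ p.toReal := Real.rpow_nonneg hhalf0 _
        apply Summable.of_nonneg_of_le (fun k => Real.rpow_nonneg (norm_nonneg _) _)
          (fun k => ?_)
          ((summable_geometric_of_lt_one hρ0 hρ1).mul_left (C ^ p.toReal))
        calc ‖∑' n, t n * vv 𝕜 n k‖ ^ p.toReal
            ≤ (C * (2⁻¹:ℝ) ^ k) ^ p.toReal :=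
              Real.rpow_le_rpow (norm_nonneg _) (x_le hC htC k) hp'.le
          _ = C ^ p.toReal * ((2⁻¹:ℝ) ^ p.toReal) ^ k := by
              rw [Real.mul_rpow hC (by positivity), pow_rpow_comm]
    · -- dp convergence
      by_cases hptop : p = ⊤
      · subst hptop
        have hdp : ∀ f g : ℕ → 𝕜, dp ⊤ f g = ⨆ k, ‖f k - g k‖ := by
          intro f g; rw [dp, if_pos rfl]
        simp only [hdp]
        apply squeeze_zero (fun N => Real.iSup_nonneg fun k => norm_nonneg _)
          (fun N => ?_) (hlim C)
        apply ciSup_le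
        intro k
        calc ‖(∑ n ∈ Finset.range N, t n * vv 𝕜 n k) - ∑' n, t n * vv 𝕜 n k‖
            ≤ C * (2⁻¹:ℝ) ^ N * (2⁻¹:ℝ) ^ k := diff_le hC htC N k
          _ ≤ C * (2⁻¹:ℝ) ^ N * 1 :=
              mul_le_mul_of_nonneg_left (pow_le_one₀ hhalf0 hhalf1.le) (by positivity)
          _ = C * (2⁻¹:ℝ) ^ N := mul_one _
      · have hp' : 0 < p.toReal := ENNReal.toReal_pos hp.ne' hptop
        have hρ1 : (2⁻¹:ℝ) ^ p.toReal < 1 := Real.rpow_lt_one hhalf0 hhalf1 hp'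
        have hρ0 : (0:ℝ) ≤ (2⁻¹:ℝ) ^ p.toReal := Real.rpow_nonneg hhalf0 _
        set ρ : ℝ := (2⁻¹:ℝ) ^ p.toReal with hρdef
        set D : ℕ → ℝ := fun N =>
          ∑' k, ‖(∑ n ∈ Finset.range N, t n * vv 𝕜 n k) - ∑' n, t n * vv 𝕜 n k‖ ^ p.toReal
          with hDdef
        have hDnn : ∀ N, 0 ≤ D N := fun N =>
          tsum_nonneg fun k => Real.rpow_nonneg (norm_nonneg _) _
        have key : ∀ N, D N ≤ (C ^ p.toReal * (1 - ρ)⁻¹) * ρ ^ N := by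
          intro N
          have hterm : ∀ k,
              ‖(∑ n ∈ Finset.range N, t n * vv 𝕜 n k) - ∑' n, t n * vv 𝕜 n k‖ ^ p.toReal
                ≤ (C * (2⁻¹:ℝ) ^ N) ^ p.toReal * ρ ^ k := by
            intro k
            calc ‖(∑ n ∈ Finset.range N, t n * vv 𝕜 n k) - ∑' n, t n * vv 𝕜 n k‖ ^ p.toReal
                ≤ (C * (2⁻¹:ℝ) ^ N * (2⁻¹:ℝ) ^ k) ^ p.toReal :=
                  Real.rpow_le_rpow (norm_nonneg _) (diff_le hC htC N k) hp'.le
              _ = (C * (2⁻¹:ℝ) ^ N) ^ p.toReal * ρ ^ k := by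
                  rw [Real.mul_rpow (by positivity) (by positivity), pow_rpow_comm]
          have hgeo : Summable (fun k : ℕ => (C * (2⁻¹:ℝ) ^ N) ^ p.toReal * ρ ^ k) :=
            (summable_geometric_of_lt_one hρ0 hρ1).mul_left _
          have hsl : Summable (fun k =>
              ‖(∑ n ∈ Finset.range N, t n * vv 𝕜 n k) - ∑' n, t n * vv 𝕜 n k‖ ^ p.toReal) :=
            Summable.of_nonneg_of_le (fun k => Real.rpow_nonneg (norm_nonneg _) _) hterm hgeo
          calc D N ≤ ∑' k : ℕ, (C * (2⁻¹:ℝ) ^ N) ^ p.toReal * ρ ^ k :=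
                Summable.tsum_le_tsum hterm hsl hgeo
            _ = (C * (2⁻¹:ℝ) ^ N) ^ p.toReal * (1 - ρ)⁻¹ := by
                rw [tsum_mul_left, tsum_geometric_of_lt_one hρ0 hρ1]
            _ = (C ^ p.toReal * (1 - ρ)⁻¹) * ρ ^ N := by
                rw [Real.mul_rpow hC (by positivity), pow_rpow_comm]; ring
        have hB0 : Tendsto (fun N : ℕ => (C ^ p.toReal * (1 - ρ)⁻¹) * ρ ^ N)
            atTop (nhds 0) := by
          have := (tendsto_pow_atTop_nhds_zero_of_lt_one hρ0 hρ1).const_mul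
            (C ^ p.toReal * (1 - ρ)⁻¹)
          simpa using this
        rcases lt_or_ge p 1 with h1 | h1
        · have hdp : ∀ N, dp p (fun k => ∑ n ∈ Finset.range N, t n * vv 𝕜 n k)
              (fun k => ∑' n, t n * vv 𝕜 n k) = D N := by
            intro N; rw [dp, if_neg hptop, if_pos h1]
          simp only [hdp]
          exact squeeze_zero hDnn key hB0
        · have hdp : ∀ N, dp p (fun k => ∑ n ∈ Finset.range N, t n * vv 𝕜 n k)
              (fun k => ∑' n, t n * vv 𝕜 n k) = (D N) ^ (1 / p.toReal) := by
            intro N; rw [dp, if_neg hptop, if_neg (not_lt.mpr h1)]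
          simp only [hdp]
          have hinv : (0:ℝ) < 1 / p.toReal := by positivity
          apply squeeze_zero (fun N => Real.rpow_nonneg (hDnn N) _)
            (fun N => Real.rpow_le_rpow (hDnn N) (key N) hinv.le)
          have := hB0.rpow_const (Or.inr hinv.le)
          simpa [Real.zero_rpow (show p.toReal⁻¹ ≠ 0 from (by positivity : (0:ℝ) < p.toReal⁻¹).ne')] using this
    · -- x = 0 → t = 0
      intro h0 n
      exact t_eq_zero hC htC (fun k => by simpa using congrFun h0 k) n
    · -- x ≠ 0 → finite zero set
      intro hne
      have hex : ∃ n, t n ≠ 0 := by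
        by_contra h
        push_neg at h
        exact hne (funext fun k => by simp [h])
      exact zero_set_finite hC htC (Nat.find_spec hex)
        (fun j hj => not_not.mp (Nat.find_min hex hj))
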